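/- Let α, β, γ, δ, α', β', γ', δ' ∈ ℝ satisfy β − γ = β' − γ' and (β + γ)² − 4·α·δ = (β' + γ')² − 4·α'·δ' = 1. Then there exist a, b, c, d ∈ ℝ with a·d − b·c = 1 such that α' = α·d² + δ·b² + (β+γ)·b·d, β' = α·c·d + δ·a·b + (β+γ)·b·c + β, γ' = α·c·d + δ·a·b + (β+γ)·b·c + γ, and δ' = α·c² + δ·a² + (β+γ)·a·c. -/

import Mathlib

/-- Any normalised triple `(α, δ, s)` with `s² - 4αδ = 1` can be mapped to the
standard one `(0, 0, 1)` by an SL₂ element. -/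
lemma weingarten_toE (α δ s : ℝ) (h : s ^ 2 - 4 * α * δ = 1) :
    ∃ a b c d : ℝ, a * d - b * c = 1 ∧
      α * d ^ 2 + δ * b ^ 2 + s * b * d = 0 ∧
      α * c ^ 2 + δ * a ^ 2 + s * a * c = 0 ∧
      2 * (α * c * d + δ * a * b + s * b * c) + s = 1 := by
  by_cases hδ : δ = 0
  · subst hδ
    have hs : (s - 1) * (s + 1) = 0 := by nlinarith [h]
    rcases mul_eq_zero.mp hs with h1 | h1
    · have hs1 : s = 1 := by linarith
      exact ⟨1, -α, 0, 1, by ring, by rw [hs1]; ring, by ring, by rw [hs1]; ring⟩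
    · have hs1 : s = -1 := by linarith
      exact ⟨α, -1, 1, 0, by ring, by ring, by rw [hs1]; ring, by rw [hs1]; ring⟩
  · refine ⟨(-1 - s) / (2 * δ), (s - 1) / 2, 1, -δ, ?_, ?_, ?_, ?_⟩
    · field_simp
      ring
    · field_simp
      linear_combination (-1) * δ * h
    · field_simp
      linear_combination (-1) * h
    · field_simp
      linear_combination h

/-- The standard triple `(0,0,1)` can be mapped to any normalised triple
`(α, δ, s)` with `s² - 4αδ = 1` by an SL₂ element. -/
lemma weingarten_fromE (α δ s : ℝ) (h : s ^ 2 - 4 * α * δ = 1) :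
    ∃ a b c d : ℝ, a * d - b * c = 1 ∧
      b * d = α ∧ a * c = δ ∧ 2 * (b * c) + 1 = s := by
  by_cases hs : s + 1 = 0
  · have hαδ : α * δ = 0 := by nlinarith [h]
    rcases mul_eq_zero.mp hαδ with h1 | h1
    · exact ⟨δ, -1, 1, 0, by ring, by rw [h1]; ring, by ring, by linarith⟩
    · exact ⟨0, -1, 1, -α, by ring, by ring, by rw [h1]; ring, by linarith⟩
  · refine ⟨1, 2 * α / (s + 1), δ, (s + 1) / 2, ?_, ?_, ?_, ?_⟩
    · field_simp
      linear_combination h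
    · field_simp
    · ring
    · field_simp
      linear_combination -h

/-- Transitivity of the SL₂(ℝ) action on normalised semi-quadratic Weingarten
relations sharing the same `Λ₁ = β - γ` (with `Λ₂ = (β+γ)² - 4αδ = 1`). -/
theorem stmt_16 (α β γ δ α' β' γ' δ' : ℝ)
    (hΛ₁ : β - γ = β' - γ')
    (hΛ₂ : (β + γ) ^ 2 - 4 * α * δ = 1)
    (hΛ₂' : (β' + γ') ^ 2 - 4 * α' * δ' = 1) :
    ∃ a b c d : ℝ, a * d - b * c = 1 ∧
      α' = α * d ^ 2 + δ * b ^ 2 + (β + γ) * b * d ∧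
      β' = α * c * d + δ * a * b + (β + γ) * b * c + β ∧
      γ' = α * c * d + δ * a * b + (β + γ) * b * c + γ ∧
      δ' = α * c ^ 2 + δ * a ^ 2 + (β + γ) * a * c := by
  obtain ⟨a₁, b₁, c₁, d₁, hd1, hA1, hA2, hA3⟩ := weingarten_toE α δ (β + γ) hΛ₂
  obtain ⟨a₂, b₂, c₂, d₂, hd2, hB1, hB2, hB3⟩ := weingarten_fromE α' δ' (β' + γ') hΛ₂'
  refine ⟨a₁ * a₂ + b₁ * c₂, a₁ * b₂ + b₁ * d₂, c₁ * a₂ + d₁ * c₂, c₁ * b₂ + d₁ * d₂,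
    ?_, ?_, ?_, ?_, ?_⟩
  · linear_combination (a₂ * d₂ - b₂ * c₂) * hd1 + hd2
  · linear_combination -hB1 - d₂ ^ 2 * hA1 - b₂ ^ 2 * hA2 - b₂ * d₂ * hA3
      - b₂ * d₂ * (β + γ) * hd1
  · linear_combination -hB3 / 2 - c₂ * d₂ * hA1 - a₂ * b₂ * hA2
      - ((2 * b₂ * c₂ + 1) / 2) * hA3 - hΛ₁ / 2 - b₂ * c₂ * (β + γ) * hd1
      - (α * c₁ * d₁ + δ * a₁ * b₁ + (β + γ) * b₁ * c₁) * hd2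
  · linear_combination -hB3 / 2 - c₂ * d₂ * hA1 - a₂ * b₂ * hA2
      - ((2 * b₂ * c₂ + 1) / 2) * hA3 + hΛ₁ / 2 - b₂ * c₂ * (β + γ) * hd1
      - (α * c₁ * d₁ + δ * a₁ * b₁ + (β + γ) * b₁ * c₁) * hd2
  · linear_combination -hB2 - c₂ ^ 2 * hA1 - a₂ ^ 2 * hA2 - a₂ * c₂ * hA3
      - a₂ * c₂ * (β + γ) * hd1
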